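/- arXiv:1407.6426 — 2 statements merged into one kernel-verified Lean document; each statement's English description precedes it below -/
import Mathlib

section
/- Let f : ℝ≥0 → ℝ≥0 be continuous, increasing, and bounded, and suppose z̃ is a fixed point of f at which f is differentiable with f'(z̃) > 1. Then there exist fixed points z* > z̃ and z** < z̃ of f (assuming f(0) > 0). -/
/-- if `f : [0,∞) → [0,∞)` is continuous, increasing and bounded,
with `f 0 > 0`, and `z̃` is a fixed point at which `f` is differentiable with
derivative greater than `1`, then `f` has fixed points `z* > z̃` and `z** < z̃`
(both in `[0,∞)`). -/
theorem unstable_fixed_point_flanked_by_fixed_points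
    (f : ℝ → ℝ) (hc : ContinuousOn f (Set.Ici 0))
    (hmono : MonotoneOn f (Set.Ici 0))
    (hmaps : Set.MapsTo f (Set.Ici 0) (Set.Ici 0))
    (M : ℝ) (hbdd : ∀ x ∈ Set.Ici (0:ℝ), f x ≤ M)
    (h0 : 0 < f 0)
    (zt : ℝ) (hzt : zt ∈ Set.Ici (0:ℝ)) (hfix : f zt = zt)
    (f' : ℝ) (hderiv : HasDerivAt f f' zt) (hslope : 1 < f') :
    (∃ zs, zt < zs ∧ f zs = zs) ∧ (∃ zss, 0 ≤ zss ∧ zss < zt ∧ f zss = zss) := by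
  have hzt0 : (0:ℝ) ≤ zt := hzt
  have hztpos : 0 < zt := by
    rcases lt_or_eq_of_le hzt0 with h | h
    · exact h
    · exfalso; rw [← h] at hfix; linarith
  have hslopeT : Filter.Tendsto (slope f zt) (nhdsWithin zt {zt}ᶜ) (nhds f') :=
    hasDerivAt_iff_tendsto_slope.mp hderiv
  have hev : ∀ᶠ x in nhdsWithin zt {zt}ᶜ, 1 < slope f zt x :=
    hslopeT.eventually (eventually_gt_nhds hslope)
  -- the function g x = f x - x
  have hgc : ContinuousOn (fun x => f x - x) (Set.Ici 0) :=
    hc.sub continuousOn_id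
  constructor
  · -- point above zt with f a > a
    obtain ⟨a, hsa, ha⟩ : ∃ a, 1 < slope f zt a ∧ a ∈ Set.Ioi zt := by
      have h1 : ∀ᶠ x in nhdsWithin zt (Set.Ioi zt), 1 < slope f zt x :=
        hev.filter_mono (nhdsWithin_mono _ (fun x hx => ne_of_gt hx))
      exact (h1.and self_mem_nhdsWithin).exists
    have ha' : zt < a := ha
    have hfa : a < f a := by
      rw [slope_def_field] at hsa
      have h2 : 0 < a - zt := by linarith
      rw [hfix] at hsa
      have := (one_lt_div h2).mp hsa
      linarith
    -- f a ≤ M, so a < M; apply IVT on [a, M]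
    have haM : a < M := lt_of_lt_of_le hfa (hbdd a (le_of_lt (lt_of_le_of_lt hzt0 ha')))
    have ha0 : (0:ℝ) ≤ a := le_of_lt (lt_of_le_of_lt hzt0 ha')
    have hIcc : Set.Icc a M ⊆ Set.Ici 0 := fun x hx => le_trans ha0 hx.1
    have hM0 : (0:ℝ) ≤ M := le_trans ha0 (le_of_lt haM)
    have key : (0:ℝ) ∈ Set.Icc ((fun x => f x - x) M) ((fun x => f x - x) a) := by
      constructor
      · simp only
        have := hbdd M (by exact hM0)
        linarith
      · simp only; linarith
    obtain ⟨z, hz, hgz⟩ := intermediate_value_Icc' (le_of_lt haM) (hgc.mono hIcc) key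
    exact ⟨z, lt_of_lt_of_le ha' hz.1, by simpa [sub_eq_zero] using hgz⟩
  · -- point in (0, zt) with f b < b
    obtain ⟨b, hsb, hb⟩ : ∃ b, 1 < slope f zt b ∧ b ∈ Set.Ioo 0 zt := by
      have h1 : ∀ᶠ x in nhdsWithin zt (Set.Iio zt), 1 < slope f zt x :=
        hev.filter_mono (nhdsWithin_mono _ (fun x hx => ne_of_lt hx))
      have h2 : Set.Ioo (0:ℝ) zt ∈ nhdsWithin zt (Set.Iio zt) :=
        Ioo_mem_nhdsLT_of_mem ⟨hztpos, le_refl zt⟩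
      exact (h1.and h2).exists
    have hfb : f b < b := by
      rw [slope_def_field, hfix] at hsb
      have h2 : b - zt < 0 := by linarith [hb.2]
      have := (one_lt_div_of_neg h2).mp hsb
      linarith
    have hIcc : Set.Icc (0:ℝ) b ⊆ Set.Ici 0 := fun x hx => hx.1
    have key : (0:ℝ) ∈ Set.Icc ((fun x => f x - x) b) ((fun x => f x - x) 0) := by
      constructor
      · simp only; linarith
      · simp only; linarith
    obtain ⟨z, hz, hgz⟩ := intermediate_value_Icc' (le_of_lt hb.1) (hgc.mono hIcc) key
    exact ⟨z, hz.1, lt_of_le_of_lt hz.2 hb.2, by simpa [sub_eq_zero] using hgz⟩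
end

section
/- Let A be a symmetric positive definite real matrix with nonpositive off-diagonal entries and suppose A is irreducible (the underlying graph of nonzero off-diagonal entries plus diagonal is connected). Then every entry of A⁻¹ is strictly positive. -/
/-- an irreducible symmetric positive definite matrix with
nonpositive off-diagonal entries (an irreducible symmetric M-matrix) has an
entrywise strictly positive inverse. Irreducibility is expressed by the
connectedness of the graph of nonzero off-diagonal entries. -/
theorem irreducible_M_matrix_inv_pos
    {n : Type*} [Fintype n] [DecidableEq n]
    (A : Matrix n n ℝ) (hsymm : A.IsSymm) (hpd : A.PosDef)
    (hoffdiag : ∀ i j, i ≠ j → A i j ≤ 0)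
    (hirr : ∀ i j : n, Relation.ReflTransGen (fun a b => a ≠ b ∧ A a b ≠ 0) i j) :
    ∀ i j, 0 < A⁻¹ i j := by
  intro i0 j
  set x : n → ℝ := fun i => A⁻¹ i j with hxdef
  have hdet : IsUnit A.det := isUnit_iff_ne_zero.mpr hpd.det_pos.ne'
  have hAinv : A * A⁻¹ = 1 := Matrix.mul_nonsing_inv A hdet
  have hAx : ∀ i, (∑ k, A i k * x k) = if i = j then (1:ℝ) else 0 := by
    intro i
    have : (∑ k, A i k * A⁻¹ k j) = (A * A⁻¹) i j := (Matrix.mul_apply).symm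
    rw [hxdef]
    simp only [this, hAinv, Matrix.one_apply]
  have hAxnn : ∀ i, 0 ≤ ∑ k, A i k * x k := by
    intro i; rw [hAx i]; split <;> norm_num
  -- negative and positive parts
  set v : n → ℝ := fun i => max (-x i) 0 with hvdef
  set u : n → ℝ := fun i => max (x i) 0 with hudef
  have hv0 : ∀ i, 0 ≤ v i := fun i => le_max_right _ _
  have hu0 : ∀ i, 0 ≤ u i := fun i => le_max_right _ _
  have hx_uv : ∀ i, x i = u i - v i := by
    intro i
    rcases le_total 0 (x i) with h | h
    · simp [hudef, hvdef, max_eq_left, h, max_eq_right, neg_nonpos.mpr h]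
    · simp [hudef, hvdef, max_eq_right h, max_eq_left (neg_nonneg.mpr h)]
  have huv0 : ∀ i, v i * u i = 0 := by
    intro i
    rcases le_total 0 (x i) with h | h
    · simp [hvdef, max_eq_right (neg_nonpos.mpr h)]
    · simp [hudef, max_eq_right h]
  -- T1 ≥ 0
  have hT1 : 0 ≤ ∑ i, v i * ∑ k, A i k * x k :=
    Finset.sum_nonneg fun i _ => mul_nonneg (hv0 i) (hAxnn i)
  -- T2 ≤ 0
  have hT2 : (∑ i, ∑ k, v i * (A i k * u k)) ≤ 0 := by
    apply Finset.sum_nonpos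
    intro i _
    apply Finset.sum_nonpos
    intro k _
    rcases eq_or_ne i k with rfl | hik
    · rw [show v i * (A i i * u i) = A i i * (v i * u i) by ring, huv0 i, mul_zero]
    · have := hoffdiag i k hik
      have : v i * (A i k * u k) = (A i k) * (v i * u k) := by ring
      rw [this]
      exact mul_nonpos_of_nonpos_of_nonneg (hoffdiag i k hik)
        (mul_nonneg (hv0 i) (hu0 k))
  -- quadratic form of v is nonpositive
  have hsplit : (∑ i, v i * ∑ k, A i k * x k)
      = (∑ i, ∑ k, v i * (A i k * u k)) - (∑ i, ∑ k, v i * (A i k * v k)) := by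
    rw [← Finset.sum_sub_distrib]
    apply Finset.sum_congr rfl
    intro i _
    rw [Finset.mul_sum, ← Finset.sum_sub_distrib]
    apply Finset.sum_congr rfl
    intro k _
    rw [hx_uv k]; ring
  have hQ : (∑ i, ∑ k, v i * (A i k * v k)) ≤ 0 := by
    have := hT1
    rw [hsplit] at this
    linarith
  -- hence v = 0, so x ≥ 0
  have hxnn : ∀ i, 0 ≤ x i := by
    by_contra hc
    push_neg at hc
    obtain ⟨i, hi⟩ := hc
    have hvne : v ≠ 0 := by
      intro h
      have h1 : v i = 0 := congrFun h i
      have h2 : v i = -x i := max_eq_left (by linarith)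
      linarith
    have hpos := hpd.dotProduct_mulVec_pos hvne
    have heq : dotProduct (star v) (A.mulVec v)
        = ∑ i, ∑ k, v i * (A i k * v k) := by
      simp [dotProduct, Matrix.mulVec, Finset.mul_sum]
    rw [heq] at hpos
    linarith
  -- x j > 0
  have hxj : 0 < x j := by
    rcases lt_or_eq_of_le (hxnn j) with h | h
    · exact h
    · exfalso
      have h1 : (∑ k, A j k * x k) = 1 := by rw [hAx j]; simp
      have h2 : (∑ k, A j k * x k) ≤ 0 := by
        apply Finset.sum_nonpos
        intro k _
        rcases eq_or_ne k j with rfl | hkj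
        · rw [← h]; simp
        · exact mul_nonpos_of_nonpos_of_nonneg (hoffdiag j k (Ne.symm hkj)) (hxnn k)
      linarith
  -- zero set is closed under adjacency
  have hstep : ∀ i k, x i = 0 → i ≠ k → A i k ≠ 0 → x k = 0 := by
    intro i k hxi hik hAik
    have hij : i ≠ j := by rintro rfl; rw [hxi] at hxj; exact lt_irrefl _ hxj
    have h0 : (∑ m, A i m * x m) = 0 := by rw [hAx i]; simp [hij]
    have hterm : ∀ m ∈ Finset.univ, A i m * x m ≤ 0 := by
      intro m _
      rcases eq_or_ne m i with rfl | hmi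
      · rw [hxi, mul_zero]
      · exact mul_nonpos_of_nonpos_of_nonneg (hoffdiag i m (Ne.symm hmi)) (hxnn m)
    have := (Finset.sum_eq_zero_iff_of_nonpos hterm).mp h0 k (Finset.mem_univ k)
    rcases mul_eq_zero.mp this with h | h
    · exact absurd h hAik
    · exact h
  -- irreducibility: x i0 ≠ 0
  have hchain : ∀ a b : n, Relation.ReflTransGen (fun a b => a ≠ b ∧ A a b ≠ 0) a b →
      x a = 0 → x b = 0 := by
    intro a b h
    induction h with
    | refl => exact id
    | tail _ step ih => exact fun ha => hstep _ _ (ih ha) step.1 step.2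
  have hne : x i0 ≠ 0 := by
    intro h0
    have := hchain i0 j (hirr i0 j) h0
    rw [this] at hxj; exact lt_irrefl _ hxj
  exact lt_of_le_of_ne (hxnn i0) (Ne.symm hne)
end
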